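/- Let C be an ILFSC on Σ with s states, |Σ| = k. For every ℓ ≤ n and every u ∈ Σⁿ, H(π_{u_ℓ}^{(ℓ)})/(ℓ log k) − ρ_C(u) ≤ ⌊n/ℓ⌋⁻¹ + f_s^k(ℓ), where u_ℓ = u ↾ ⌊n/ℓ⌋·ℓ and f_s^k(ℓ) = log(s²(1 + log((s² + k^ℓ)/s²)))/(ℓ log k). -/

import Mathlib

open Filter Real

/-- Base-2 Shannon entropy of a discrete probability measure on a finite set. -/
noncomputable def ent {X : Type*} [Fintype X] (α : X → ℝ) : ℝ :=
  ∑ x, α x * Real.logb 2 (α x)⁻¹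

/-- A finite-state compressor on alphabet `Γ`. -/
structure FSC (Γ : Type) where
  Q : Type
  fin : Fintype Q
  δ : Q → Γ → Q
  ν : Q → Γ → List Bool
  q0 : Q

attribute [instance] FSC.fin

/-- Extended transition function, starting from state `q`. -/
def FSC.runFrom {Γ : Type} (C : FSC Γ) : C.Q → List Γ → C.Q
  | q, [] => q
  | q, a :: u => C.runFrom (C.δ q a) u

/-- Output of the compressor started in state `q`. -/
def FSC.outFrom {Γ : Type} (C : FSC Γ) : C.Q → List Γ → List Bool
  | _, [] => []
  | q, a :: u => C.ν q a ++ C.outFrom (C.δ q a) u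

/-- Output of the compressor on input `u` (from the initial state). -/
def FSC.output {Γ : Type} (C : FSC Γ) (u : List Γ) : List Bool := C.outFrom C.q0 u

/-- Information-losslessness: `u ↦ (C(u), δ*(q₀,u))` is injective. -/
def FSC.IL {Γ : Type} (C : FSC Γ) : Prop :=
  Function.Injective fun u : List Γ => (C.output u, C.runFrom C.q0 u)

/-- Number of states. -/
def FSC.states {Γ : Type} (C : FSC Γ) : ℕ := Fintype.card C.Q

/-- `L_C(w)`: the minimum over all states `q` of the output length of `C` started at `q`. -/
noncomputable def FSC.L {Γ : Type} (C : FSC Γ) (w : List Γ) : ℕ :=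
  haveI : Nonempty C.Q := ⟨C.q0⟩
  Finset.univ.inf' Finset.univ_nonempty fun q => (C.outFrom q w).length

/-- Compression ratio of `u` attained by `C`, over an alphabet of size `k`. -/
noncomputable def compRatio (k : ℕ) {Γ : Type} (C : FSC Γ) (u : List Γ) : ℝ :=
  ((C.output u).length : ℝ) / (u.length * Real.logb 2 k)

/-- Aligned block frequency of the block `x` (of length `ℓ`) in the string `u`. -/
noncomputable def blockFreqL {k : Type} [DecidableEq k] (ℓ : ℕ) (u : List k) (x : List k) : ℝ :=
  (ℓ : ℝ) / u.length *
    ((List.range (u.length / ℓ)).filter fun m => (u.drop (m * ℓ)).take ℓ = x).length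

/-- The function `f_s^k(ℓ)` from the Generalized Kraft Inequality. -/
noncomputable def fsk (s k ℓ : ℕ) : ℝ :=
  Real.logb 2 ((s : ℝ) ^ 2 *
      (1 + Real.logb 2 (((s : ℝ) ^ 2 + (k : ℝ) ^ ℓ) / (s : ℝ) ^ 2))) /
    (ℓ * Real.logb 2 k)

section AuxLemmas

open Finset

variable {Γ : Type}

theorem FSC.runFrom_append (C : FSC Γ) (a b : List Γ) :
    ∀ q, C.runFrom q (a ++ b) = C.runFrom (C.runFrom q a) b := by
  induction a with
  | nil => intro q; rfl
  | cons x xs ih => intro q; simpa [FSC.runFrom] using ih (C.δ q x)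

theorem FSC.outFrom_append (C : FSC Γ) (a b : List Γ) :
    ∀ q, C.outFrom q (a ++ b) = C.outFrom q a ++ C.outFrom (C.runFrom q a) b := by
  induction a with
  | nil => intro q; rfl
  | cons x xs ih =>
      intro q
      simp only [List.cons_append, FSC.outFrom, FSC.runFrom, List.append_eq, ih (C.δ q x), List.append_assoc]

/-- The set of reachable states. -/
noncomputable def FSC.rch (C : FSC Γ) : Finset C.Q :=
  @Finset.filter _ (fun q => ∃ w : List Γ, C.runFrom C.q0 w = q) (Classical.decPred _)
    Finset.univ

theorem FSC.mem_rch (C : FSC Γ) {q : C.Q} : q ∈ C.rch ↔ ∃ w : List Γ, C.runFrom C.q0 w = q := by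
  simp [FSC.rch]

theorem FSC.rch_nonempty (C : FSC Γ) : C.rch.Nonempty :=
  ⟨C.q0, C.mem_rch.2 ⟨[], rfl⟩⟩

theorem FSC.runFrom_mem_rch (C : FSC Γ) {q : C.Q} (hq : q ∈ C.rch) (v : List Γ) :
    C.runFrom q v ∈ C.rch := by
  obtain ⟨w, rfl⟩ := C.mem_rch.1 hq
  exact C.mem_rch.2 ⟨w ++ v, C.runFrom_append w v _⟩

/-- Minimum output length over reachable states. -/
noncomputable def FSC.Lr (C : FSC Γ) (w : List Γ) : ℕ :=
  C.rch.inf' C.rch_nonempty fun q => (C.outFrom q w).length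

theorem FSC.Lr_le (C : FSC Γ) {q : C.Q} (hq : q ∈ C.rch) (w : List Γ) :
    C.Lr w ≤ (C.outFrom q w).length :=
  Finset.inf'_le _ hq

theorem FSC.cancel {C : FSC Γ} (hC : C.IL) {q : C.Q} (hq : q ∈ C.rch) {x y : List Γ}
    (h1 : C.outFrom q x = C.outFrom q y) (h2 : C.runFrom q x = C.runFrom q y) : x = y := by
  obtain ⟨w, rfl⟩ := C.mem_rch.1 hq
  have h3 : (fun u : List Γ => (C.output u, C.runFrom C.q0 u)) (w ++ x)
      = (fun u : List Γ => (C.output u, C.runFrom C.q0 u)) (w ++ y) := by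
    simp only [FSC.output, C.outFrom_append, C.runFrom_append, h1, h2]
  exact List.append_cancel_left (hC h3)

/-- Sheinwald's block decomposition lower bound. -/
theorem FSC.sum_Lr_le (C : FSC Γ) (ℓ : ℕ) :
    ∀ (m : ℕ) (w : List Γ) (q : C.Q), q ∈ C.rch → w.length = m * ℓ →
      ∑ j ∈ Finset.range m, C.Lr ((w.drop (j * ℓ)).take ℓ) ≤ (C.outFrom q w).length := by
  intro m
  induction m with
  | zero => intro w q _ _; simp
  | succ m ih =>
      intro w q hq hw
      have hwa : w = w.take ℓ ++ w.drop ℓ := (List.take_append_drop ℓ w).symm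
      have hlen : (w.drop ℓ).length = m * ℓ := by
        simp only [List.length_drop, hw, Nat.succ_mul]; omega
      have hrec := ih (w.drop ℓ) (C.runFrom q (w.take ℓ))
        (C.runFrom_mem_rch hq _) hlen
      have hout : (C.outFrom q w).length
          = (C.outFrom q (w.take ℓ)).length + (C.outFrom (C.runFrom q (w.take ℓ)) (w.drop ℓ)).length := by
        conv_lhs => rw [hwa]
        rw [C.outFrom_append, List.length_append]
      rw [Finset.sum_range_succ']
      have hblock : ∀ j, (w.drop ((j + 1) * ℓ)).take ℓ = ((w.drop ℓ).drop (j * ℓ)).take ℓ := by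
        intro j
        rw [List.drop_drop]
        congr 2
        ring
      have h0 : (w.drop (0 * ℓ)).take ℓ = w.take ℓ := by simp
      rw [h0, hout]
      have h1 : ∑ j ∈ Finset.range m, C.Lr ((w.drop ((j + 1) * ℓ)).take ℓ)
          = ∑ j ∈ Finset.range m, C.Lr (((w.drop ℓ).drop (j * ℓ)).take ℓ) := by
        exact Finset.sum_congr rfl fun j _ => by rw [hblock]
      rw [h1]
      have h2 : C.Lr (w.take ℓ) ≤ (C.outFrom q (w.take ℓ)).length := C.Lr_le hq _
      omega

end AuxLemmas
section AuxLemmas2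

open Finset

/-- Jensen's inequality for the logarithm. -/
theorem jensen_log {X : Type*} [Fintype X] (p w : X → ℝ) (hp : ∀ x, 0 ≤ p x)
    (hp1 : ∑ x, p x = 1) (hw : ∀ x, 0 < w x) :
    ∑ x, p x * Real.log (w x / p x) ≤ Real.log (∑ x, w x) := by
  classical
  set s := Finset.univ.filter (fun x => p x ≠ 0) with hs
  have hps : ∑ x ∈ s, p x = 1 := by rw [← hp1]; exact Finset.sum_filter_ne_zero _
  have hppos : ∀ x ∈ s, 0 < p x := fun x hx =>
    lt_of_le_of_ne (hp x) (Ne.symm (Finset.mem_filter.1 hx).2)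
  have hsub : ∀ x ∈ s, w x / p x ∈ Set.Ioi (0:ℝ) := fun x hx =>
    Set.mem_Ioi.2 (div_pos (hw x) (hppos x hx))
  have hJ := (strictConcaveOn_log_Ioi.concaveOn).le_map_sum (t := s) (w := p)
    (p := fun x => w x / p x) (fun x _ => hp x) hps hsub
  have h1 : ∑ x ∈ s, p x • (w x / p x) = ∑ x ∈ s, w x :=
    Finset.sum_congr rfl fun x hx => by
      have : p x ≠ 0 := (Finset.mem_filter.1 hx).2
      rw [smul_eq_mul]
      field_simp
  have h2 : ∑ x, p x * Real.log (w x / p x) = ∑ x ∈ s, p x * Real.log (w x / p x) := by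
    refine (Finset.sum_filter_of_ne fun x _ hne => ?_).symm
    intro h0
    exact hne (by rw [h0, zero_mul])
  have hne : s.Nonempty := by
    rcases Finset.eq_empty_or_nonempty s with h | h
    · exfalso; rw [h] at hps; simp at hps
    · exact h
  have hspos : 0 < ∑ x ∈ s, w x := Finset.sum_pos (fun x _ => hw x) hne
  have hmono : Real.log (∑ x ∈ s, w x) ≤ Real.log (∑ x, w x) :=
    Real.log_le_log hspos
      (Finset.sum_le_sum_of_subset_of_nonneg (Finset.filter_subset _ _)
        fun x _ _ => (hw x).le)
  calc ∑ x, p x * Real.log (w x / p x)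
      = ∑ x ∈ s, p x • Real.log (w x / p x) := by rw [h2]; rfl
    _ ≤ Real.log (∑ x ∈ s, p x • (w x / p x)) := hJ
    _ = Real.log (∑ x ∈ s, w x) := by rw [h1]
    _ ≤ Real.log (∑ x, w x) := hmono

theorem mem_ofFn_image {t : ℕ} (l : List Bool) (h : l.length = t) :
    l ∈ (Finset.univ : Finset (Fin t → Bool)).image List.ofFn := by
  subst h
  exact Finset.mem_image.2 ⟨l.get, Finset.mem_univ _, List.ofFn_get l⟩

theorem card_fiber_le {Γ : Type} [Fintype Γ] [DecidableEq Γ] (C : FSC Γ) (hC : C.IL)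
    (ℓ t : ℕ) :
    (Finset.univ.filter fun x : Fin ℓ → Γ => C.Lr (List.ofFn x) = t).card
      ≤ C.states ^ 2 * 2 ^ t := by
  classical
  have hex : ∀ x : Fin ℓ → Γ, ∃ q ∈ C.rch,
      C.Lr (List.ofFn x) = (C.outFrom q (List.ofFn x)).length := fun x =>
    Finset.exists_mem_eq_inf' C.rch_nonempty _
  choose qm hqm hLq using hex
  set tgt : Finset (C.Q × C.Q × List Bool) :=
    Finset.univ ×ˢ Finset.univ ×ˢ ((Finset.univ : Finset (Fin t → Bool)).image List.ofFn)
    with htgt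
  have hmaps : ∀ x ∈ (Finset.univ.filter fun x : Fin ℓ → Γ => C.Lr (List.ofFn x) = t),
      (qm x, C.runFrom (qm x) (List.ofFn x), C.outFrom (qm x) (List.ofFn x)) ∈ tgt := by
    intro x hx
    have hxt : C.Lr (List.ofFn x) = t := (Finset.mem_filter.1 hx).2
    refine Finset.mem_product.2 ⟨Finset.mem_univ _, Finset.mem_product.2 ⟨Finset.mem_univ _, ?_⟩⟩
    exact mem_ofFn_image _ (by rw [← hLq x, hxt])
  have hinj : Set.InjOn
      (fun x : Fin ℓ → Γ =>
        (qm x, C.runFrom (qm x) (List.ofFn x), C.outFrom (qm x) (List.ofFn x)))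
      ↑(Finset.univ.filter fun x : Fin ℓ → Γ => C.Lr (List.ofFn x) = t) := by
    intro x hx y hy hxy
    simp only [Prod.mk.injEq] at hxy
    obtain ⟨hq, hrun, hout⟩ := hxy
    rw [← hq] at hrun hout
    exact List.ofFn_injective (FSC.cancel hC (hqm x) hout hrun)
  have hcard := Finset.card_le_card_of_injOn _ hmaps hinj
  refine hcard.trans ?_
  rw [htgt, Finset.card_product, Finset.card_product]
  have h1 : ((Finset.univ : Finset (Fin t → Bool)).image List.ofFn).card ≤ 2 ^ t := by
    refine (Finset.card_image_le).trans ?_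
    simp [Fintype.card_fun]
  calc Finset.univ.card * (Finset.univ.card * ((Finset.univ : Finset (Fin t → Bool)).image List.ofFn).card)
      ≤ C.states * (C.states * 2 ^ t) := by
        refine Nat.mul_le_mul (le_of_eq (Finset.card_univ)) (Nat.mul_le_mul (le_of_eq (Finset.card_univ)) h1)
    _ = C.states ^ 2 * 2 ^ t := by ring

end AuxLemmas2
section AuxLemmas3

open Finset

theorem states_pos {Γ : Type} (C : FSC Γ) : 0 < C.states :=
  @Fintype.card_pos _ _ ⟨C.q0⟩

/-- The Generalized Kraft Inequality for ILFSCs. -/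
theorem kraft {Γ : Type} [Fintype Γ] [DecidableEq Γ] (C : FSC Γ) (hC : C.IL) (ℓ : ℕ) :
    ∑ x : Fin ℓ → Γ, ((2:ℝ) ^ C.Lr (List.ofFn x))⁻¹ ≤
      (C.states : ℝ) ^ 2 *
        (1 + Real.logb 2 (((C.states : ℝ) ^ 2 + (Fintype.card Γ : ℝ) ^ ℓ)
          / (C.states : ℝ) ^ 2)) := by
  classical
  set s := C.states with hsdef
  have hs1 : 1 ≤ s := states_pos C
  set N : ℕ := Fintype.card Γ ^ ℓ with hNdef
  have hcard : Fintype.card (Fin ℓ → Γ) = N := by simp [Fintype.card_fun, hNdef]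
  set A : ℝ := (s : ℝ) ^ 2 with hA
  have hA1 : (1:ℝ) ≤ A := by
    rw [hA]
    exact_mod_cast Nat.one_le_pow _ _ hs1
  have hA0 : (0:ℝ) < A := lt_of_lt_of_le one_pos hA1
  -- choose T minimal with N ≤ s^2 * (2^(T+1) - 1)
  have hPex : ∃ T : ℕ, N ≤ s ^ 2 * (2 ^ (T + 1) - 1) := by
    refine ⟨N, ?_⟩
    have h1 : N < 2 ^ N := Nat.lt_two_pow_self
    have h2 : 2 ^ N ≤ 2 ^ (N + 1) - 1 := by
      have : 2 ^ (N + 1) = 2 * 2 ^ N := by ring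
      omega
    calc N ≤ 2 ^ (N + 1) - 1 := by omega
      _ ≤ s ^ 2 * (2 ^ (N + 1) - 1) := Nat.le_mul_of_pos_left _ (Nat.pow_pos hs1)
  set T : ℕ := Nat.find hPex with hT
  have hTprop : N ≤ s ^ 2 * (2 ^ (T + 1) - 1) := Nat.find_spec hPex
  have hTmin : ∀ t < T, ¬ N ≤ s ^ 2 * (2 ^ (t + 1) - 1) := fun t ht => Nat.find_min hPex ht
  set Lx : (Fin ℓ → Γ) → ℕ := fun x => C.Lr (List.ofFn x) with hLx
  -- pointwise bound
  have hpoint : ∀ x : Fin ℓ → Γ, ((2:ℝ) ^ Lx x)⁻¹ ≤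
      (if Lx x ≤ T then ((2:ℝ) ^ Lx x)⁻¹ - ((2:ℝ) ^ (T + 1))⁻¹ else 0)
        + ((2:ℝ) ^ (T + 1))⁻¹ := by
    intro x
    by_cases h : Lx x ≤ T
    · rw [if_pos h]; ring_nf; exact le_refl _
    · rw [if_neg h, zero_add]
      have : (2:ℝ) ^ (T + 1) ≤ (2:ℝ) ^ Lx x :=
        pow_le_pow_right₀ (by norm_num) (by omega)
      exact inv_anti₀ (by positivity) this
  have hsum1 : ∑ x : Fin ℓ → Γ, ((2:ℝ) ^ Lx x)⁻¹ ≤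
      (∑ x : Fin ℓ → Γ, if Lx x ≤ T then ((2:ℝ) ^ Lx x)⁻¹ - ((2:ℝ) ^ (T + 1))⁻¹ else 0)
        + (N : ℝ) * ((2:ℝ) ^ (T + 1))⁻¹ := by
    calc ∑ x : Fin ℓ → Γ, ((2:ℝ) ^ Lx x)⁻¹
        ≤ ∑ x : Fin ℓ → Γ,
          ((if Lx x ≤ T then ((2:ℝ) ^ Lx x)⁻¹ - ((2:ℝ) ^ (T + 1))⁻¹ else 0)
            + ((2:ℝ) ^ (T + 1))⁻¹) := Finset.sum_le_sum fun x _ => hpoint x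
      _ = (∑ x : Fin ℓ → Γ, if Lx x ≤ T then ((2:ℝ) ^ Lx x)⁻¹ - ((2:ℝ) ^ (T + 1))⁻¹ else 0)
            + (N : ℝ) * ((2:ℝ) ^ (T + 1))⁻¹ := by
          rw [Finset.sum_add_distrib, Finset.sum_const, Finset.card_univ, hcard,
            nsmul_eq_mul]
  -- group the filtered sum by the value of Lx
  have hgroup : (∑ x : Fin ℓ → Γ, if Lx x ≤ T then ((2:ℝ) ^ Lx x)⁻¹ - ((2:ℝ) ^ (T + 1))⁻¹ else 0)
      ≤ ∑ t ∈ Finset.range (T + 1), A * 2 ^ t * (((2:ℝ) ^ t)⁻¹ - ((2:ℝ) ^ (T + 1))⁻¹) := by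
    rw [← Finset.sum_filter]
    have hmaps : ∀ x ∈ Finset.univ.filter (fun x : Fin ℓ → Γ => Lx x ≤ T),
        Lx x ∈ Finset.range (T + 1) := by
      intro x hx
      simp only [Finset.mem_filter] at hx
      exact Finset.mem_range.2 (by omega)
    rw [← Finset.sum_fiberwise_of_maps_to hmaps]
    refine Finset.sum_le_sum fun t ht => ?_
    have htT : t ≤ T := by have := Finset.mem_range.1 ht; omega
    have hconst : ∀ x ∈ (Finset.univ.filter (fun x : Fin ℓ → Γ => Lx x ≤ T)).filter
        (fun x => Lx x = t),
        ((2:ℝ) ^ Lx x)⁻¹ - ((2:ℝ) ^ (T + 1))⁻¹ = ((2:ℝ) ^ t)⁻¹ - ((2:ℝ) ^ (T + 1))⁻¹ := by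
      intro x hx
      have : Lx x = t := (Finset.mem_filter.1 hx).2
      rw [this]
    rw [Finset.sum_congr rfl hconst, Finset.sum_const, nsmul_eq_mul]
    have hsubset : (Finset.univ.filter (fun x : Fin ℓ → Γ => Lx x ≤ T)).filter
        (fun x => Lx x = t) ⊆ Finset.univ.filter (fun x : Fin ℓ → Γ => Lx x = t) := by
      intro x hx
      simp only [Finset.mem_filter] at hx ⊢
      exact ⟨hx.1.1, hx.2⟩
    have hcardle : ((Finset.univ.filter (fun x : Fin ℓ → Γ => Lx x ≤ T)).filter
        (fun x => Lx x = t)).card ≤ s ^ 2 * 2 ^ t :=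
      le_trans (Finset.card_le_card hsubset) (card_fiber_le C hC ℓ t)
    have hnn : (0:ℝ) ≤ ((2:ℝ) ^ t)⁻¹ - ((2:ℝ) ^ (T + 1))⁻¹ := by
      have : (2:ℝ) ^ t ≤ (2:ℝ) ^ (T + 1) := pow_le_pow_right₀ (by norm_num) (by omega)
      have h2t : (0:ℝ) < (2:ℝ) ^ t := by positivity
      have := inv_anti₀ h2t this
      linarith
    have : ((((Finset.univ.filter (fun x : Fin ℓ → Γ => Lx x ≤ T)).filter
        (fun x => Lx x = t)).card : ℝ)) ≤ A * 2 ^ t := by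
      rw [hA]
      calc ((((Finset.univ.filter (fun x : Fin ℓ → Γ => Lx x ≤ T)).filter
          (fun x => Lx x = t)).card : ℝ)) ≤ ((s ^ 2 * 2 ^ t : ℕ) : ℝ) := by exact_mod_cast hcardle
        _ = (s : ℝ) ^ 2 * 2 ^ t := by push_cast; ring
    exact mul_le_mul_of_nonneg_right this hnn
  -- evaluate the geometric sum
  have hgeom : ∑ t ∈ Finset.range (T + 1), A * 2 ^ t * (((2:ℝ) ^ t)⁻¹ - ((2:ℝ) ^ (T + 1))⁻¹)
      = A * (T + 1) - A * ((2:ℝ) ^ (T + 1) - 1) * ((2:ℝ) ^ (T + 1))⁻¹ := by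
    have hgs : ∑ t ∈ Finset.range (T + 1), (2:ℝ) ^ t = (2:ℝ) ^ (T + 1) - 1 := by
      rw [geom_sum_eq (by norm_num)]
      norm_num
    have : ∀ t ∈ Finset.range (T + 1),
        A * 2 ^ t * (((2:ℝ) ^ t)⁻¹ - ((2:ℝ) ^ (T + 1))⁻¹)
          = A - A * ((2:ℝ) ^ (T + 1))⁻¹ * 2 ^ t := by
      intro t _
      have h2t : ((2:ℝ) ^ t) ≠ 0 := by positivity
      field_simp
    rw [Finset.sum_congr rfl this, Finset.sum_sub_distrib, Finset.sum_const,
      ← Finset.mul_sum, hgs, Finset.card_range, nsmul_eq_mul]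
    push_cast
    ring
  -- N ≤ A * (2^(T+1) - 1) in the reals
  have hNA : (N : ℝ) ≤ A * ((2:ℝ) ^ (T + 1) - 1) := by
    have h1 : (1:ℕ) ≤ 2 ^ (T + 1) := Nat.one_le_two_pow
    have := hTprop
    have hcast : ((s ^ 2 * (2 ^ (T + 1) - 1) : ℕ) : ℝ) = A * ((2:ℝ) ^ (T + 1) - 1) := by
      rw [hA]
      push_cast [h1]
      ring
    calc (N : ℝ) ≤ ((s ^ 2 * (2 ^ (T + 1) - 1) : ℕ) : ℝ) := by exact_mod_cast this
      _ = A * ((2:ℝ) ^ (T + 1) - 1) := hcast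
  have hS : ∑ x : Fin ℓ → Γ, ((2:ℝ) ^ Lx x)⁻¹ ≤ A * (T + 1) := by
    have h2T : (0:ℝ) < ((2:ℝ) ^ (T + 1))⁻¹ := by positivity
    have := hsum1.trans (add_le_add_left (hgroup.trans (le_of_eq hgeom)) _)
    have hfinal : A * (T + 1) - A * ((2:ℝ) ^ (T + 1) - 1) * ((2:ℝ) ^ (T + 1))⁻¹
        + (N : ℝ) * ((2:ℝ) ^ (T + 1))⁻¹ ≤ A * (T + 1) := by
      nlinarith [hNA, h2T]
    linarith
  -- T ≤ logb 2 ((A + N) / A)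
  have hTlog : (T : ℝ) ≤ Real.logb 2 ((A + (N : ℝ)) / A) := by
    rcases Nat.eq_zero_or_pos T with h0 | hpos
    · rw [h0]
      push_cast
      refine Real.logb_nonneg (by norm_num) ?_
      rw [le_div_iff₀ hA0]
      have : (0:ℝ) ≤ (N : ℝ) := Nat.cast_nonneg _
      linarith
    · obtain ⟨T₀, hT0⟩ : ∃ T₀, T = T₀ + 1 := ⟨T - 1, by omega⟩
      rw [hT0]
      have hmin := hTmin T₀ (by omega)
      push_neg at hmin
      have h1 : (1:ℕ) ≤ 2 ^ (T₀ + 1) := Nat.one_le_two_pow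
      have hlt : A * ((2:ℝ) ^ (T₀ + 1) - 1) < (N : ℝ) := by
        have hcast : ((s ^ 2 * (2 ^ (T₀ + 1) - 1) : ℕ) : ℝ) = A * ((2:ℝ) ^ (T₀ + 1) - 1) := by
          rw [hA]; push_cast [h1]; ring
        calc A * ((2:ℝ) ^ (T₀ + 1) - 1) = ((s ^ 2 * (2 ^ (T₀ + 1) - 1) : ℕ) : ℝ) := hcast.symm
          _ < (N : ℝ) := by exact_mod_cast hmin
      have hplt : (2:ℝ) ^ (T₀ + 1) ≤ (A + (N : ℝ)) / A := by
        rw [le_div_iff₀ hA0]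
        nlinarith
      calc ((T₀ + 1 : ℕ) : ℝ) = Real.logb 2 ((2:ℝ) ^ (T₀ + 1)) := by
            rw [Real.logb_pow, Real.logb_self_eq_one (by norm_num)]
            push_cast; ring
        _ ≤ Real.logb 2 ((A + (N : ℝ)) / A) :=
            Real.logb_le_logb_of_le (by norm_num) (by positivity) hplt
  -- conclude
  have hNcast : (N : ℝ) = (Fintype.card Γ : ℝ) ^ ℓ := by rw [hNdef]; push_cast; ring
  calc ∑ x : Fin ℓ → Γ, ((2:ℝ) ^ C.Lr (List.ofFn x))⁻¹
      = ∑ x : Fin ℓ → Γ, ((2:ℝ) ^ Lx x)⁻¹ := rfl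
    _ ≤ A * (T + 1) := hS
    _ ≤ A * (1 + Real.logb 2 ((A + (N : ℝ)) / A)) := by
        refine mul_le_mul_of_nonneg_left ?_ hA0.le
        linarith [hTlog]
    _ = (C.states : ℝ) ^ 2 *
        (1 + Real.logb 2 (((C.states : ℝ) ^ 2 + (Fintype.card Γ : ℝ) ^ ℓ)
          / (C.states : ℝ) ^ 2)) := by rw [hA, hNcast, hsdef]

end AuxLemmas3
section Assemble

theorem assemble_arith (E R lR lk nR mR fs : ℝ) (hl : 0 < lR) (hlk1 : 1 ≤ lk)
    (hm1 : 1 ≤ mR) (hn : 0 < nR) (hR0 : 0 ≤ R) (hml : mR * lR ≤ nR)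
    (hnm : nR ≤ mR * lR + lR) (hfs : 0 ≤ fs)
    (hEb : E / (lR * lk) ≤ R / (mR * (lR * lk)) + fs) (hEle : E ≤ lR * lk) :
    E / (lR * lk) - R / (nR * lk) ≤ mR⁻¹ + fs := by
  have hlk0 : (0:ℝ) < lk := lt_of_lt_of_le one_pos hlk1
  have hm0 : (0:ℝ) < mR := lt_of_lt_of_le one_pos hm1
  by_cases hcase : R ≤ nR * lk
  · have hkey : R / (mR * (lR * lk)) ≤ R / (nR * lk) + mR⁻¹ := by
      have h1 : R / (nR * lk) + mR⁻¹ = (R * mR + nR * lk) / (nR * lk * mR) := by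
        field_simp
      have hd1 : (0:ℝ) < mR * (lR * lk) := mul_pos hm0 (mul_pos hl hlk0)
      have hd2 : (0:ℝ) < nR * lk * mR := mul_pos (mul_pos hn hlk0) hm0
      rw [h1, div_le_div_iff₀ hd1 hd2]
      have f1 : R * (mR * lk) * nR ≤ R * (mR * lk) * (mR * lR + lR) :=
        mul_le_mul_of_nonneg_left hnm (by positivity)
      have f2 : R * (mR * lR * lk) ≤ (nR * lk) * (mR * lR * lk) :=
        mul_le_mul_of_nonneg_right hcase (by positivity)
      nlinarith [f1, f2]
    linarith
  · push_neg at hcase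
    have h1 : E / (lR * lk) ≤ 1 := by
      rw [div_le_one (mul_pos hl hlk0)]
      exact hEle
    have h2 : 1 < R / (nR * lk) := (one_lt_div (mul_pos hn hlk0)).2 hcase
    have h3 : (0:ℝ) ≤ mR⁻¹ := by positivity
    linarith

end Assemble
/-- The normalized block entropy of the prefix `u_ℓ` exceeds the compression
ratio of `u` attained by an `s`-state ILFSC by at most `⌊n/ℓ⌋⁻¹ + f_s^k(ℓ)`. -/
theorem blockEntropy_sub_compRatio_le {k : Type} [Fintype k] [DecidableEq k]
    (hk : 2 ≤ Fintype.card k) (C : FSC k) (hC : C.IL)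
    (ℓ n : ℕ) (hℓ : 0 < ℓ) (hℓn : ℓ ≤ n) (u : List k) (hu : u.length = n) :
    (ent fun x : Fin ℓ → k => blockFreqL ℓ (u.take (n / ℓ * ℓ)) (List.ofFn x)) /
        (ℓ * Real.logb 2 (Fintype.card k)) -
      compRatio (Fintype.card k) C u ≤
    ((n / ℓ : ℕ) : ℝ)⁻¹ + fsk C.states (Fintype.card k) ℓ := by
  have hkpos : 0 < Fintype.card k := by omega
  have hknem : Nonempty k := Fintype.card_pos_iff.1 hkpos
  obtain ⟨d⟩ := hknem
  set K := Fintype.card k with hK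
  set m := n / ℓ with hm
  have hm1 : 1 ≤ m := (Nat.one_le_div_iff hℓ).2 hℓn
  have hmn : m * ℓ ≤ n := by rw [hm]; exact Nat.div_mul_le_self n ℓ
  have hnlt : n < m * ℓ + ℓ := by
    have h1 : n % ℓ < ℓ := Nat.mod_lt n hℓ
    have h2 : m * ℓ + n % ℓ = n := by rw [hm, Nat.mul_comm]; exact Nat.div_add_mod n ℓ
    omega
  set uℓ := u.take (m * ℓ) with huℓ
  have hlen : uℓ.length = m * ℓ := by
    rw [huℓ, List.length_take, hu]
    exact min_eq_left hmn
  -- blocks as tuples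
  set g : ℕ → (Fin ℓ → k) := fun j i => uℓ.getD (j * ℓ + (i : ℕ)) d with hg
  have hblock : ∀ j < m, List.ofFn (g j) = (uℓ.drop (j * ℓ)).take ℓ := by
    intro j hj
    have hjl : j * ℓ + ℓ ≤ m * ℓ := by
      have : j + 1 ≤ m := hj
      calc j * ℓ + ℓ = (j + 1) * ℓ := by ring
        _ ≤ m * ℓ := Nat.mul_le_mul_right ℓ this
    apply List.ext_getElem
    · simp only [List.length_ofFn, List.length_take, List.length_drop, hlen]
      omega
    · intro i h1 h2
      have hi : i < ℓ := by simpa using h1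
      have hbound : j * ℓ + i < uℓ.length := by rw [hlen]; omega
      rw [List.getElem_ofFn, List.getElem_take, List.getElem_drop]
      show uℓ.getD (j * ℓ + i) d = uℓ[j * ℓ + i]
      exact List.getD_eq_getElem uℓ d hbound
  -- counting
  set cnt : (Fin ℓ → k) → ℕ := fun x => ((Finset.range m).filter fun j => g j = x).card
    with hcnt_def
  have hcnt : ∀ x : Fin ℓ → k,
      ((List.range (uℓ.length / ℓ)).filter
        fun j => (uℓ.drop (j * ℓ)).take ℓ = List.ofFn x).length = cnt x := by
    intro x
    have hml : uℓ.length / ℓ = m := by rw [hlen]; exact Nat.mul_div_cancel m hℓ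
    rw [hml]
    have step0 : ((List.range m).filter
        fun j => decide ((uℓ.drop (j * ℓ)).take ℓ = List.ofFn x)).length
        = ((Finset.range m).filter fun j => (uℓ.drop (j * ℓ)).take ℓ = List.ofFn x).card := rfl
    rw [step0]
    congr 1
    apply Finset.filter_congr
    intro j hj
    have hjm : j < m := Finset.mem_range.1 hj
    constructor
    · intro h
      exact List.ofFn_injective (by rw [hblock j hjm, h])
    · intro h
      rw [← hblock j hjm, h]
  have hsumcnt : ∑ x : Fin ℓ → k, cnt x = m := by
    rw [← Finset.card_range m, hcnt_def]
    exact (Finset.card_eq_sum_card_fiberwise fun j _ => Finset.mem_univ (g j)).symm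
  have hsumF : ∀ F : (Fin ℓ → k) → ℝ,
      ∑ x : Fin ℓ → k, (cnt x : ℝ) * F x = ∑ j ∈ Finset.range m, F (g j) := by
    intro F
    rw [← Finset.sum_fiberwise_of_maps_to (fun j _ => Finset.mem_univ (g j))
      (fun j => F (g j))]
    refine Finset.sum_congr rfl fun x _ => ?_
    have hconst : ∀ j ∈ (Finset.range m).filter (fun j => g j = x), F (g j) = F x := by
      intro j hj
      rw [(Finset.mem_filter.1 hj).2]
    rw [Finset.sum_congr rfl hconst, Finset.sum_const, nsmul_eq_mul, hcnt_def]
  -- the probability measure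
  set pr : (Fin ℓ → k) → ℝ := fun x => (cnt x : ℝ) / m with hprdef
  have hmR : (0:ℝ) < m := by exact_mod_cast hm1
  have hpreq : ∀ x : Fin ℓ → k, blockFreqL ℓ uℓ (List.ofFn x) = pr x := by
    intro x
    rw [blockFreqL, hcnt x, hlen, hprdef]
    have hl0 : (ℓ:ℝ) ≠ 0 := by exact_mod_cast hℓ.ne'
    have hm0 : (m:ℝ) ≠ 0 := hmR.ne'
    push_cast
    field_simp
  have hpr0 : ∀ x, 0 ≤ pr x := fun x => by positivity
  have hpr1 : ∑ x, pr x = 1 := by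
    rw [hprdef]
    simp only
    rw [← Finset.sum_div]
    rw [show ∑ x : Fin ℓ → k, (cnt x : ℝ) = (m : ℝ) by exact_mod_cast hsumcnt]
    field_simp
  -- entropy rewriting
  have hentrw : (ent fun x : Fin ℓ → k => blockFreqL ℓ uℓ (List.ofFn x)) = ent pr := by
    congr 1
    funext x
    exact hpreq x
  set Lx : (Fin ℓ → k) → ℕ := fun x => C.Lr (List.ofFn x) with hLxdef
  set w1 : (Fin ℓ → k) → ℝ := fun x => ((2:ℝ) ^ Lx x)⁻¹ with hw1
  have hw1pos : ∀ x, 0 < w1 x := fun x => by rw [hw1]; positivity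
  set S : ℝ := ∑ x : Fin ℓ → k, w1 x with hS
  have hJ1 := jensen_log pr w1 hpr0 hpr1 hw1pos
  have hJ2 := jensen_log pr (fun _ => 1) hpr0 hpr1 (fun _ => one_pos)
  have hlog2 : (0:ℝ) < Real.log 2 := Real.log_pos (by norm_num)
  -- termwise identity A
  have idA : ∀ x, pr x * Real.log (pr x)⁻¹
      = pr x * Real.log (w1 x / pr x) + pr x * (Lx x : ℝ) * Real.log 2 := by
    intro x
    by_cases h : pr x = 0
    · rw [h]; ring
    · have hprx : 0 < pr x := lt_of_le_of_ne (hpr0 x) (Ne.symm h)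
      have hlw : Real.log (w1 x) = -((Lx x : ℝ) * Real.log 2) := by
        rw [hw1]
        simp only
        rw [Real.log_inv, Real.log_pow]
      rw [Real.log_div (hw1pos x).ne' h, hlw, Real.log_inv]
      ring
  have idB : ∀ x, pr x * Real.log (pr x)⁻¹ = pr x * Real.log (1 / pr x) := by
    intro x
    rw [one_div]
  have hEnt1 : ∑ x, pr x * Real.log (pr x)⁻¹
      ≤ (∑ x, pr x * (Lx x : ℝ)) * Real.log 2 + Real.log S := by
    have h1 : ∑ x, pr x * Real.log (pr x)⁻¹
        = (∑ x, pr x * Real.log (w1 x / pr x)) + (∑ x, pr x * (Lx x : ℝ)) * Real.log 2 := by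
      rw [Finset.sum_mul, ← Finset.sum_add_distrib]
      exact Finset.sum_congr rfl fun x _ => idA x
    rw [h1]
    linarith [hJ1]
  have hEnt2 : ∑ x, pr x * Real.log (pr x)⁻¹ ≤ (ℓ : ℝ) * Real.log K := by
    have h2 : ∑ x, pr x * Real.log (pr x)⁻¹ = ∑ x, pr x * Real.log ((fun _ => (1:ℝ)) x / pr x) :=
      Finset.sum_congr rfl fun x _ => idB x
    have h3 : ∑ x : Fin ℓ → k, (fun _ => (1:ℝ)) x = ((K:ℝ)) ^ ℓ := by
      rw [Finset.sum_const, Finset.card_univ, Fintype.card_fun]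
      simp [hK]
    rw [h2]
    calc ∑ x, pr x * Real.log ((fun _ => (1:ℝ)) x / pr x)
        ≤ Real.log (∑ x : Fin ℓ → k, (fun _ => (1:ℝ)) x) := hJ2
      _ = Real.log ((K:ℝ) ^ ℓ) := by rw [h3]
      _ = (ℓ : ℝ) * Real.log K := by rw [Real.log_pow]
  -- Sheinwald
  have hSh : (∑ x, pr x * (Lx x : ℝ)) * m ≤ ((C.output u).length : ℝ) := by
    have e1 : (∑ x, pr x * (Lx x : ℝ)) * m = ∑ x, (cnt x : ℝ) * (Lx x : ℝ) := by
      rw [Finset.sum_mul]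
      refine Finset.sum_congr rfl fun x _ => ?_
      rw [hprdef]
      field_simp
    have e2 : ∑ x, (cnt x : ℝ) * (Lx x : ℝ) = ∑ j ∈ Finset.range m, (Lx (g j) : ℝ) :=
      hsumF fun x => (Lx x : ℝ)
    have e3 : ∑ j ∈ Finset.range m, (Lx (g j) : ℝ)
        = ((∑ j ∈ Finset.range m, C.Lr ((uℓ.drop (j * ℓ)).take ℓ) : ℕ) : ℝ) := by
      push_cast
      refine Finset.sum_congr rfl fun j hj => ?_
      rw [hLxdef]
      simp only
      rw [hblock j (Finset.mem_range.1 hj)]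
    have e4 : ∑ j ∈ Finset.range m, C.Lr ((uℓ.drop (j * ℓ)).take ℓ)
        ≤ (C.outFrom C.q0 uℓ).length :=
      C.sum_Lr_le ℓ m uℓ C.q0 (C.mem_rch.2 ⟨[], rfl⟩) hlen
    have e5 : (C.outFrom C.q0 uℓ).length ≤ (C.output u).length := by
      have : u = uℓ ++ u.drop (m * ℓ) := by rw [huℓ]; exact (List.take_append_drop _ u).symm
      rw [FSC.output]
      conv_rhs => rw [this]
      rw [C.outFrom_append, List.length_append]
      omega
    rw [e1, e2, e3]
    exact_mod_cast le_trans e4 e5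
  -- Kraft
  set s := C.states with hs
  set B : ℝ := (s : ℝ) ^ 2 *
      (1 + Real.logb 2 (((s : ℝ) ^ 2 + (K : ℝ) ^ ℓ) / (s : ℝ) ^ 2)) with hB
  have hSB : S ≤ B := by
    rw [hS, hB, hs, hK]
    exact kraft C hC ℓ
  haveI : Nonempty (Fin ℓ → k) := ⟨fun _ => d⟩
  have hSpos : 0 < S := by
    rw [hS]
    exact Finset.sum_pos (fun x _ => hw1pos x) Finset.univ_nonempty
  have hB1 : (1:ℝ) ≤ B := by
    rw [hB]
    have hs1 : (1:ℝ) ≤ (s:ℝ) ^ 2 := by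
      have : 1 ≤ s := states_pos C
      exact_mod_cast Nat.one_le_pow _ _ this
    have harg : (1:ℝ) ≤ ((s : ℝ) ^ 2 + (K : ℝ) ^ ℓ) / (s : ℝ) ^ 2 := by
      rw [le_div_iff₀ (by positivity)]
      have : (0:ℝ) ≤ (K:ℝ) ^ ℓ := by positivity
      linarith
    nlinarith [Real.logb_nonneg (by norm_num : (1:ℝ) < 2) harg]
  have hlogSB : Real.log S ≤ Real.log B := Real.log_le_log hSpos hSB
  -- put the entropy chain together
  set E : ℝ := ent pr with hE
  have hEeq : E = (∑ x, pr x * Real.log (pr x)⁻¹) / Real.log 2 := by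
    rw [hE, ent, Finset.sum_div]
    exact Finset.sum_congr rfl fun x _ => by rw [Real.logb, mul_div_assoc]
  set R : ℝ := ((C.output u).length : ℝ) with hR
  have hR0 : 0 ≤ R := by rw [hR]; positivity
  have hEbound : E ≤ R / m + Real.logb 2 B := by
    rw [hEeq, Real.logb, div_le_iff₀ hlog2]
    have h1 : (∑ x, pr x * (Lx x : ℝ)) ≤ R / m := by
      rw [le_div_iff₀ hmR]
      exact hSh
    calc ∑ x, pr x * Real.log (pr x)⁻¹
        ≤ (∑ x, pr x * (Lx x : ℝ)) * Real.log 2 + Real.log S := hEnt1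
      _ ≤ (R / m) * Real.log 2 + Real.log B :=
          add_le_add (mul_le_mul_of_nonneg_right h1 hlog2.le) hlogSB
      _ = (R / m + Real.log B / Real.log 2) * Real.log 2 := by field_simp
  set lk : ℝ := Real.logb 2 (K : ℝ) with hlk
  have hlk1 : (1:ℝ) ≤ lk := by
    rw [hlk]
    rw [show (1:ℝ) = Real.logb 2 2 by rw [Real.logb_self_eq_one (by norm_num)]]
    exact Real.logb_le_logb_of_le (by norm_num) (by norm_num) (by exact_mod_cast hk)
  have hlk0 : (0:ℝ) < lk := lt_of_lt_of_le one_pos hlk1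
  have hl0 : (0:ℝ) < (ℓ:ℝ) := by exact_mod_cast hℓ
  have hn0 : (0:ℝ) < (n:ℝ) := by exact_mod_cast lt_of_lt_of_le hℓ hℓn
  have hfsk : fsk s K ℓ = Real.logb 2 B / ((ℓ:ℝ) * lk) := by
    rw [fsk, hB, hlk]
  have hfsk0 : 0 ≤ fsk s K ℓ := by
    rw [hfsk]
    have : 0 ≤ Real.logb 2 B := Real.logb_nonneg (by norm_num) hB1
    positivity
  have hEmain : E / ((ℓ:ℝ) * lk) ≤ R / ((m:ℝ) * ((ℓ:ℝ) * lk)) + fsk s K ℓ := by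
    rw [hfsk]
    have hd : (0:ℝ) < (ℓ:ℝ) * lk := by positivity
    have hstep : E / ((ℓ:ℝ) * lk) ≤ (R / m + Real.logb 2 B) / ((ℓ:ℝ) * lk) := by
      gcongr
    refine hstep.trans (le_of_eq ?_)
    rw [add_div, div_div]
  have hEle : E ≤ (ℓ:ℝ) * lk := by
    rw [hEeq, hlk, Real.logb, div_le_iff₀ hlog2]
    calc ∑ x, pr x * Real.log (pr x)⁻¹ ≤ (ℓ : ℝ) * Real.log K := hEnt2
      _ = (ℓ:ℝ) * (Real.log (K:ℝ) / Real.log 2) * Real.log 2 := by field_simp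
  -- rewrite the goal and conclude
  rw [hentrw]
  simp only [compRatio, hu]
  rw [← hlk, ← hR]
  have hncast : (n:ℝ) ≤ (m:ℝ) * ℓ + ℓ := by exact_mod_cast hnlt.le
  have hmlcast : (m:ℝ) * ℓ ≤ (n:ℝ) := by exact_mod_cast hmn
  have hm1cast : (1:ℝ) ≤ (m:ℝ) := by exact_mod_cast hm1
  exact assemble_arith E R (ℓ:ℝ) lk (n:ℝ) (m:ℝ) (fsk s K ℓ) hl0 hlk1 hm1cast hn0 hR0
    hmlcast hncast hfsk0 hEmain hEle
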